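/- For every word w over {a_1,...,a_n} with content c(w) (the set of indices of letters occurring in w), the power w^k equals the idempotent e_{c(w)} for all k ≥ |c(w)|, where e_X denotes the product of the generators indexed by X in strictly decreasing order. -/

import Mathlib

/-- The defining relations of the Kiselman semigroup `K_n`:
`aᵢ² = aᵢ`, and `aᵢaⱼaᵢ = aⱼaᵢaⱼ = aⱼaᵢ` for `i < j`. -/
inductive KisRel (n : ℕ) : FreeMonoid (Fin n) → FreeMonoid (Fin n) → Prop
  | idem (i : Fin n) : KisRel n (.of i * .of i) (.of i)
  | braid₁ {i j : Fin n} (h : i < j) :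
      KisRel n (.of i * .of j * .of i) (.of j * .of i)
  | braid₂ {i j : Fin n} (h : i < j) :
      KisRel n (.of j * .of i * .of j) (.of j * .of i)

/-- The Kiselman semigroup (monoid) `K_n`. -/
abbrev Kiselman (n : ℕ) := PresentedMonoid (KisRel n)

/-- The canonical projection from the free monoid on the generators to `K_n`. -/
def kmk (n : ℕ) : FreeMonoid (Fin n) →* Kiselman n := PresentedMonoid.mk (KisRel n)

/-- The generator `a_{i+1}` (0-indexed: `ka i` is the paper's `a_{i+1}`). -/
def ka {n : ℕ} (i : Fin n) : Kiselman n := PresentedMonoid.of (KisRel n) i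

/-- The idempotent `e_X`: the product of the generators indexed by `X` in strictly
decreasing order of indices. -/
def eX {n : ℕ} (X : Finset (Fin n)) : Kiselman n :=
  kmk n (FreeMonoid.ofList ((X.sort (· ≤ ·)).reverse))

namespace KisAux

variable {n : ℕ}

/-- Product of a list of generators in `K_n`. -/
def P (l : List (Fin n)) : Kiselman n := (l.map ka).prod

@[simp] theorem P_nil : P ([] : List (Fin n)) = 1 := rfl

@[simp] theorem P_cons (x : Fin n) (l : List (Fin n)) : P (x :: l) = ka x * P l := by
  simp [P]

@[simp] theorem P_append (l l' : List (Fin n)) : P (l ++ l') = P l * P l' := by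
  simp [P]

theorem kis_sound {a b : FreeMonoid (Fin n)} (h : KisRel n a b) : kmk n a = kmk n b :=
  Quotient.sound (ConGen.Rel.of _ _ h)

theorem r1 (i : Fin n) : ka i * ka i = ka i := kis_sound (KisRel.idem i)

theorem r2 {i j : Fin n} (h : i < j) : ka i * ka j * ka i = ka j * ka i :=
  kis_sound (KisRel.braid₁ h)

theorem r3 {i j : Fin n} (h : i < j) : ka j * ka i * ka j = ka j * ka i :=
  kis_sound (KisRel.braid₂ h)

theorem kmk_ofList (l : List (Fin n)) : kmk n (FreeMonoid.ofList l) = P l := by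
  induction l with
  | nil => rfl
  | cons x t ih =>
      rw [FreeMonoid.ofList_cons, map_mul, ih, P_cons]
      rfl

theorem kmk_eq (w : FreeMonoid (Fin n)) : kmk n w = P w.toList := kmk_ofList w.toList

/-- Key lemma: if `g` absorbs `ka j` on the right, then multiplying `g` by a word with
letters `≤ j` is the same as multiplying by the word with all `j`s removed. -/
theorem filter_absorb (j : Fin n) :
    ∀ l : List (Fin n), (∀ x ∈ l, x ≤ j) →
    ∀ g : Kiselman n, g * ka j = g → g * P l = g * P (l.filter (· ≠ j)) := by
  intro l
  induction l with
  | nil => intro _ g _; rfl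
  | cons x t ih =>
      intro hle g hg
      by_cases hxj : x = j
      · subst hxj
        have h1 : g * P (x :: t) = g * P t := by
          rw [P_cons, ← mul_assoc, hg]
        rw [h1, ih (fun y hy => hle y (List.mem_cons_of_mem _ hy)) g hg]
        simp
      · have hxlt : x < j := lt_of_le_of_ne (hle x List.mem_cons_self) hxj
        have hinv : (g * ka x) * ka j = g * ka x := by
          calc (g * ka x) * ka j = (g * ka j * ka x) * ka j := by rw [hg]
            _ = g * (ka j * ka x * ka j) := by simp [mul_assoc]
            _ = g * (ka j * ka x) := by rw [r3 hxlt]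
            _ = g * ka j * ka x := by rw [mul_assoc]
            _ = g * ka x := by rw [hg]
        have h2 := ih (fun y hy => hle y (List.mem_cons_of_mem _ hy)) (g * ka x) hinv
        have hfil : (x :: t).filter (· ≠ j) = x :: t.filter (· ≠ j) := by
          simp [List.filter_cons, hxj]
        rw [hfil, P_cons, P_cons, ← mul_assoc, ← mul_assoc, h2]

theorem ka_filter (j : Fin n) (l : List (Fin n)) (hle : ∀ x ∈ l, x ≤ j) :
    ka j * P l = ka j * P (l.filter (· ≠ j)) :=
  filter_absorb j l hle (ka j) (r1 j)

theorem filter_ne_self {j : Fin n} {l : List (Fin n)} (h : ∀ x ∈ l, x ≠ j) :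
    l.filter (· ≠ j) = l :=
  List.filter_eq_self.mpr (by simpa using h)

/-- Sandwich lemma: `a_j u a_j = a_j u` when all letters of `u` are `< j`. -/
theorem sandwich (j : Fin n) (l : List (Fin n)) (hlt : ∀ x ∈ l, x < j) :
    ka j * P l * ka j = ka j * P l := by
  have hle : ∀ x ∈ l ++ [j], x ≤ j := by
    intro x hx
    rcases List.mem_append.mp hx with h | h
    · exact (hlt x h).le
    · simp at h; simp [h]
  have := ka_filter j (l ++ [j]) hle
  rw [List.filter_append] at this
  have h1 : l.filter (· ≠ j) = l := filter_ne_self (fun x hx => (hlt x hx).ne)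
  have h2 : ([j] : List (Fin n)).filter (· ≠ j) = [] := by simp
  rw [h1, h2, List.append_nil, P_append] at this
  simpa [mul_assoc] using this

/-- Left absorption for strictly decreasing lists. -/
theorem labs : ∀ l : List (Fin n), l.Pairwise (· > ·) → ∀ x ∈ l, ka x * P l = P l := by
  intro l
  induction l with
  | nil => intro _ x hx; simp at hx
  | cons a t ih =>
      intro hp x hx
      have ha : ∀ b ∈ t, b < a := List.pairwise_cons.mp hp |>.1
      have ht : t.Pairwise (· > ·) := List.pairwise_cons.mp hp |>.2
      rcases List.mem_cons.mp hx with rfl | hxt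
      · rw [P_cons, ← mul_assoc, r1]
      · have hxa : x < a := ha x hxt
        calc ka x * P (a :: t) = ka x * (ka a * (ka x * P t)) := by
              rw [P_cons, ih ht x hxt]
          _ = (ka x * ka a * ka x) * P t := by simp [mul_assoc]
          _ = (ka a * ka x) * P t := by rw [r2 hxa]
          _ = ka a * (ka x * P t) := by rw [mul_assoc]
          _ = ka a * P t := by rw [ih ht x hxt]
          _ = P (a :: t) := (P_cons a t).symm

/-- Right absorption for strictly decreasing lists. -/
theorem rabs : ∀ l : List (Fin n), l.Pairwise (· > ·) → ∀ x ∈ l, P l * ka x = P l := by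
  intro l
  induction l with
  | nil => intro _ x hx; simp at hx
  | cons a t ih =>
      intro hp x hx
      have ha : ∀ b ∈ t, b < a := List.pairwise_cons.mp hp |>.1
      have ht : t.Pairwise (· > ·) := List.pairwise_cons.mp hp |>.2
      rcases List.mem_cons.mp hx with rfl | hxt
      · rw [P_cons, mul_assoc]
        rw [← mul_assoc]
        exact sandwich x t ha
      · rw [P_cons, mul_assoc, ih ht x hxt]

theorem labs_word (l : List (Fin n)) (hl : l.Pairwise (· > ·)) :
    ∀ u : List (Fin n), (∀ x ∈ u, x ∈ l) → P u * P l = P l := by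
  intro u
  induction u with
  | nil => intro _; simp
  | cons x t ih =>
      intro hu
      rw [P_cons, mul_assoc, ih (fun y hy => hu y (List.mem_cons_of_mem _ hy)),
        labs l hl x (hu x List.mem_cons_self)]

theorem rabs_word (l : List (Fin n)) (hl : l.Pairwise (· > ·)) :
    ∀ u : List (Fin n), (∀ x ∈ u, x ∈ l) → P l * P u = P l := by
  intro u
  induction u with
  | nil => intro _; simp
  | cons x t ih =>
      intro hu
      rw [P_cons, ← mul_assoc, rabs l hl x (hu x List.mem_cons_self),
        ih (fun y hy => hu y (List.mem_cons_of_mem _ hy))]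

theorem rabs_pow (l : List (Fin n)) (hl : l.Pairwise (· > ·))
    (u : List (Fin n)) (hu : ∀ x ∈ u, x ∈ l) : ∀ t : ℕ, P l * (P u) ^ t = P l := by
  intro t
  induction t with
  | zero => simp
  | succ t ih => rw [pow_succ, ← mul_assoc, ih, rabs_word l hl u hu]

theorem pow_pull (j : Fin n) (s : List (Fin n)) (hs : ∀ x ∈ s, x < j) :
    ∀ t : ℕ, (ka j * P s) ^ (t + 1) = ka j * (P s) ^ (t + 1) := by
  intro t
  induction t with
  | zero => simp
  | succ t ih =>
      calc (ka j * P s) ^ (t + 2) = (ka j * P s) * (ka j * P s) ^ (t + 1) := by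
            rw [pow_succ']
        _ = (ka j * P s) * (ka j * (P s) ^ (t + 1)) := by rw [ih]
        _ = (ka j * P s * ka j) * (P s) ^ (t + 1) := by simp [mul_assoc]
        _ = (ka j * P s) * (P s) ^ (t + 1) := by rw [sandwich j s hs]
        _ = ka j * (P s) ^ (t + 2) := by rw [mul_assoc, ← pow_succ']

theorem mulpow (a b : Kiselman n) : ∀ k : ℕ, (a * b) ^ (k + 1) = a * (b * a) ^ k * b := by
  intro k
  induction k with
  | zero => simp
  | succ k ih =>
      calc (a * b) ^ (k + 2) = (a * b) * (a * b) ^ (k + 1) := by rw [pow_succ']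
        _ = (a * b) * (a * (b * a) ^ k * b) := by rw [ih]
        _ = a * ((b * a) * (b * a) ^ k) * b := by simp [mul_assoc]
        _ = a * (b * a) ^ (k + 1) * b := by rw [← pow_succ']

/-- The decreasing enumeration of a finset. -/
def dL (X : Finset (Fin n)) : List (Fin n) := (X.sort (· ≤ ·)).reverse

theorem eX_eq (X : Finset (Fin n)) : eX X = P (dL X) := kmk_ofList _

theorem mem_dL {X : Finset (Fin n)} {x : Fin n} : x ∈ dL X ↔ x ∈ X := by
  simp [dL, Finset.mem_sort]

theorem dL_pairwise (X : Finset (Fin n)) : (dL X).Pairwise (· > ·) := by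
  have := (Finset.sortedLT_sort X).pairwise
  exact List.pairwise_reverse.mpr this

@[simp] theorem dL_empty : dL (∅ : Finset (Fin n)) = [] := by simp [dL]

theorem dL_max (X : Finset (Fin n)) (hne : X.Nonempty) :
    dL X = X.max' hne :: dL (X.erase (X.max' hne)) := by
  set j := X.max' hne with hj
  have hjX : j ∈ X := X.max'_mem hne
  have hperm : List.Perm (X.sort (· ≤ ·)) ((X.erase j).sort (· ≤ ·) ++ [j]) := by
    refine (Finset.sort_perm_toList X _).trans ?_
    have h1 : List.Perm X.toList (j :: (X.erase j).toList) := by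
      have := Finset.toList_insert (Finset.notMem_erase j X)
      rwa [Finset.insert_erase hjX] at this
    refine h1.trans ?_
    refine List.Perm.trans ?_ (List.perm_append_singleton j _).symm
    exact List.Perm.cons j (Finset.sort_perm_toList _ _).symm
  have hsorted : ((X.erase j).sort (· ≤ ·) ++ [j]).Pairwise (· ≤ ·) := by
    rw [List.pairwise_append]
    refine ⟨Finset.pairwise_sort _ _, List.pairwise_singleton _ _, ?_⟩
    intro a ha b hb
    simp at hb
    subst hb
    exact X.le_max' a (Finset.mem_of_mem_erase ((Finset.mem_sort _).mp ha))
  have heq : X.sort (· ≤ ·) = (X.erase j).sort (· ≤ ·) ++ [j] :=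
    List.Perm.eq_of_pairwise' (Finset.pairwise_sort _ _) hsorted hperm
  rw [dL, heq, List.reverse_append]
  simp [dL]

/-- The main induction: `w^{|c(w)|} = e_{c(w)}`. -/
theorem main : ∀ m : ℕ, ∀ l : List (Fin n), l.toFinset.card = m →
    (P l) ^ m = P (dL l.toFinset) := by
  intro m
  induction m with
  | zero =>
      intro l hl
      have : l.toFinset = ∅ := Finset.card_eq_zero.mp hl
      rw [this]
      simp
  | succ m ih =>
      intro l hl
      set X := l.toFinset with hX
      have hne : X.Nonempty := Finset.card_pos.mp (by rw [hl]; omega)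
      set j := X.max' hne with hj
      have hjl : j ∈ l := List.mem_toFinset.mp (X.max'_mem hne)
      obtain ⟨u, v, huv⟩ := List.append_of_mem hjl
      have hmemX : ∀ x ∈ l, x ∈ X := fun x hx => List.mem_toFinset.mpr hx
      have hleJ : ∀ x ∈ l, x ≤ j := fun x hx => X.le_max' x (hmemX x hx)
      set z := v ++ u with hz
      have hzl : ∀ x ∈ z, x ∈ l := by
        intro x hx
        rcases List.mem_append.mp hx with h | h
        · rw [huv]; exact List.mem_append.mpr (Or.inr (List.mem_cons_of_mem _ h))
        · rw [huv]; exact List.mem_append.mpr (Or.inl h)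
      set z' := z.filter (· ≠ j) with hz'
      have hz'lt : ∀ x ∈ z', x < j := by
        intro x hx
        rw [hz', List.mem_filter] at hx
        have hxj : x ≠ j := by simpa using hx.2
        exact lt_of_le_of_ne (hleJ x (hzl x hx.1)) hxj
      have hz'fin : z'.toFinset = X.erase j := by
        ext x
        simp only [List.mem_toFinset, hz', List.mem_filter, Finset.mem_erase,
          decide_eq_true_eq]
        constructor
        · rintro ⟨h1, h2⟩
          exact ⟨by simpa using h2, hmemX x (hzl x h1)⟩
        · rintro ⟨h1, h2⟩
          have hxl : x ∈ l := List.mem_toFinset.mp h2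
          rw [huv] at hxl
          rcases List.mem_append.mp hxl with h | h
          · exact ⟨List.mem_append.mpr (Or.inr h), by simpa using h1⟩
          · rcases List.mem_cons.mp h with rfl | h
            · exact absurd rfl h1
            · exact ⟨List.mem_append.mpr (Or.inl h), by simpa using h1⟩
      have hz'card : z'.toFinset.card = m := by
        rw [hz'fin, Finset.card_erase_of_mem (X.max'_mem hne), hl]; omega
      have ihz := ih z' hz'card
      rw [hz'fin] at ihz
      set Y := X.erase j with hY
      set eY := P (dL Y) with heY
      have hYlt : ∀ x ∈ dL Y, x < j := by
        intro x hx
        have := mem_dL.mp hx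
        rw [hY, Finset.mem_erase] at this
        exact lt_of_le_of_ne (X.le_max' x this.2) this.1
      -- key computation
      have step4 : (ka j * P z') ^ m * ka j = ka j * eY * ka j := by
        cases m with
        | zero =>
            have : Y = ∅ := Finset.card_eq_zero.mp (by rw [← hz'fin, hz'card])
            rw [this] at heY
            simp only [dL_empty, P_nil] at heY
            rw [heY]
            simp [r1]
        | succ t =>
            rw [pow_pull j z' hz'lt t, ihz]
      have step5 : ka j * eY * ka j = ka j * eY := sandwich j (dL Y) hYlt
      have step6 : ka j * eY = P (dL X) := by
        rw [heY, ← P_cons, ← dL_max X hne]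
      have hcalc : (P l) ^ (m + 1) = P u * P (dL X) * P v := by
        have h0 : P l = P u * (ka j * P v) := by
          rw [huv]; simp [mul_assoc]
        rw [h0, mulpow (P u) (ka j * P v) m]
        have h1 : (ka j * P v) * P u = ka j * P z := by
          rw [hz, P_append, mul_assoc]
        have h2 : ka j * P z = ka j * P z' := ka_filter j z (fun x hx => hleJ x (hzl x hx))
        calc P u * (ka j * P v * P u) ^ m * (ka j * P v)
            = P u * ((ka j * P z') ^ m * ka j) * P v := by
              rw [h1, h2]; simp [mul_assoc]
          _ = P u * (ka j * eY * ka j) * P v := by rw [step4]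
          _ = P u * P (dL X) * P v := by rw [step5, step6]
      rw [hcalc]
      have hdlp := dL_pairwise X
      have humem : ∀ x ∈ u, x ∈ dL X := by
        intro x hx
        exact mem_dL.mpr (hmemX x (by rw [huv]; exact List.mem_append.mpr (Or.inl hx)))
      have hvmem : ∀ x ∈ v, x ∈ dL X := by
        intro x hx
        refine mem_dL.mpr (hmemX x ?_)
        rw [huv]; exact List.mem_append.mpr (Or.inr (List.mem_cons_of_mem _ hx))
      rw [mul_assoc, rabs_word (dL X) hdlp v hvmem, labs_word (dL X) hdlp u humem]

end KisAux

/-- Lemma 3: for a word `w` with content `c(w)`, `w^k = e_{c(w)}` for all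
`k ≥ |c(w)|`. -/
theorem kiselman_power_eq_idempotent (n : ℕ) (w : FreeMonoid (Fin n)) (k : ℕ)
    (hk : w.toList.toFinset.card ≤ k) :
    (kmk n w) ^ k = eX w.toList.toFinset := by
  open KisAux in
  set l := w.toList with hlw
  set X := l.toFinset with hX
  set m := X.card with hm
  have hmain := KisAux.main m l rfl
  have hkm : k = m + (k - m) := by omega
  rw [KisAux.kmk_eq w, ← hlw, hkm, pow_add, hmain, KisAux.eX_eq]
  exact KisAux.rabs_pow (KisAux.dL X) (KisAux.dL_pairwise X) l
    (fun x hx => KisAux.mem_dL.mpr (List.mem_toFinset.mpr hx)) (k - m)
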